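/- There exists an absolute constant C > 0 with the following property. Let X, Y be finite nonempty sets, f : X × Y → {−1,1}, and δ ∈ (0,1] such that disc(f) ≥ δ, i.e., for every probability distribution σ on X × Y there exists a rectangle R with |Σ_{(x,y)∈R} f(x,y)·σ(x,y)| ≥ δ. Then for every ε ∈ (0,1/2] and every probability distribution μ on X × Y there exists a rectangle R with μ(R) ≥ 2^{−C·δ^{−1}·log₂(1/ε)} and |E_{μ|R}[f]| ≥ 1 − ε. -/

import Mathlib

open Finset

set_option linter.unusedSectionVars false

namespace HighDisc

/-! ### Numeric auxiliary lemmas -/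

lemma ratio_le_rpow {δ : ℝ} (hδ0 : 0 < δ) (hδ1 : δ ≤ 1) :
    (1 - δ) / (1 + δ) ≤ (2:ℝ) ^ (-δ) := by
  have e1 : (1 - δ) / (1 + δ) ≤ 1 - δ := by
    rw [div_le_iff₀ (by linarith : (0:ℝ) < 1 + δ)]
    nlinarith
  have e2 : 1 - δ ≤ Real.exp (-δ) := by
    have := Real.add_one_le_exp (-δ); linarith
  have e3 : Real.exp (-δ) ≤ (2:ℝ) ^ (-δ) := by
    rw [Real.rpow_def_of_pos (by norm_num : (0:ℝ) < 2)]
    refine Real.exp_le_exp.mpr ?_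
    have hl2 : Real.log 2 ≤ 1 := by
      have := Real.log_le_sub_one_of_pos (by norm_num : (0:ℝ) < 2); linarith
    have hl2' : 0 < Real.log 2 := Real.log_pos (by norm_num)
    nlinarith
  linarith

lemma logb_one_div_ge_one {ε : ℝ} (hε0 : 0 < ε) (hε1 : ε ≤ 1/2) :
    1 ≤ Real.logb 2 (1/ε) := by
  have h2 : (2:ℝ) ≤ 1/ε := by rw [le_div_iff₀ hε0]; linarith
  have := Real.logb_le_logb_of_le (b := 2) (by norm_num) (by norm_num) h2
  rwa [Real.logb_self_eq_one (by norm_num)] at this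

lemma logb32_eq {ε : ℝ} (hε0 : 0 < ε) :
    Real.logb 2 (32/ε) = 5 + Real.logb 2 (1/ε) := by
  have h1 : (32/ε : ℝ) = 32 * (1/ε) := by ring
  rw [h1, Real.logb_mul (by norm_num) (by positivity)]
  congr 1
  rw [show (32:ℝ) = 2^(5:ℕ) by norm_num, Real.logb_pow,
    Real.logb_self_eq_one (by norm_num)]
  norm_num

lemma shrink_bound {δ ε : ℝ} (hδ0 : 0 < δ) (hδ1 : δ ≤ 1) (hε0 : 0 < ε) :
    ((1-δ)/8) ^ (⌈Real.logb 2 (32/ε) / δ⌉₊) ≤ (ε/32) * ((1+δ)/8) ^ (⌈Real.logb 2 (32/ε) / δ⌉₊) := by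
  set k : ℕ := ⌈Real.logb 2 (32/ε) / δ⌉₊ with hk
  have hδk : Real.logb 2 (32/ε) ≤ δ * k := by
    have h1 : Real.logb 2 (32/ε) / δ ≤ (k:ℝ) := Nat.le_ceil _
    calc Real.logb 2 (32/ε) = (Real.logb 2 (32/ε) / δ) * δ := by field_simp
      _ ≤ (k:ℝ) * δ := mul_le_mul_of_nonneg_right h1 hδ0.le
      _ = δ * k := by ring
  have hexp : (2:ℝ) ^ (-(δ * k)) ≤ ε/32 := by
    have h1 : -(δ * k) ≤ Real.logb 2 (ε/32) := by
      have h2 : Real.logb 2 (ε/32) = - Real.logb 2 (32/ε) := by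
        rw [show (ε/32) = (32/ε)⁻¹ by rw [inv_div], Real.logb_inv]
      rw [h2]; linarith
    calc (2:ℝ) ^ (-(δ * k)) ≤ (2:ℝ) ^ (Real.logb 2 (ε/32)) :=
          Real.rpow_le_rpow_of_exponent_le (by norm_num) h1
      _ = ε/32 := Real.rpow_logb (by norm_num) (by norm_num) (by positivity)
  have hba : (1-δ)/8 ≤ ((1+δ)/8) * (2:ℝ)^(-δ) := by
    have h1 := ratio_le_rpow hδ0 hδ1
    have h2 : ((1-δ):ℝ)/8 = ((1+δ)/8) * ((1-δ)/(1+δ)) := by field_simp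
    rw [h2]
    exact mul_le_mul_of_nonneg_left h1 (by linarith)
  have hb0 : (0:ℝ) ≤ (1-δ)/8 := by linarith
  have h3 : (((2:ℝ)^(-δ:ℝ))^k : ℝ) = (2:ℝ)^(-(δ * k)) := by
    rw [← Real.rpow_natCast ((2:ℝ)^(-δ:ℝ)) k, ← Real.rpow_mul (by norm_num : (0:ℝ) ≤ 2)]
    norm_num
  calc ((1-δ)/8)^k ≤ (((1+δ)/8) * (2:ℝ)^(-δ))^k := pow_le_pow_left₀ hb0 hba k
    _ = ((1+δ)/8)^k * ((2:ℝ)^(-δ:ℝ))^k := mul_pow _ _ _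
    _ = ((1+δ)/8)^k * (2:ℝ)^(-(δ * k)) := by rw [h3]
    _ ≤ ((1+δ)/8)^k * (ε/32) := by
        refine mul_le_mul_of_nonneg_left hexp (by positivity)
    _ = (ε/32) * ((1+δ)/8)^k := by ring

lemma exponent_bound {δ ε : ℝ} (hδ0 : 0 < δ) (hδ1 : δ ≤ 1) (hε0 : 0 < ε) (hε1 : ε ≤ 1/2) :
    (2:ℝ) ^ (-(100 * δ⁻¹ * Real.logb 2 (1/ε))) ≤ ((1:ℝ)/8) ^ (⌈Real.logb 2 (32/ε) / δ⌉₊ + 1) := by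
  set L : ℝ := Real.logb 2 (1/ε) with hL
  have hL1 : 1 ≤ L := logb_one_div_ge_one hε0 hε1
  set k : ℕ := ⌈Real.logb 2 (32/ε) / δ⌉₊ with hk
  have h18 : ((1:ℝ)/8) = (2:ℝ)^(-3:ℝ) := by
    rw [Real.rpow_neg (by norm_num : (0:ℝ) ≤ 2)]
    rw [show ((3:ℝ)) = ((3:ℕ):ℝ) by norm_num, Real.rpow_natCast]
    norm_num
  have hτeq : ((1:ℝ)/8) ^ (k+1) = (2:ℝ)^(((-3:ℝ)) * ((k:ℝ)+1)) := by
    rw [h18, ← Real.rpow_natCast ((2:ℝ)^(-3:ℝ)) (k+1),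
      ← Real.rpow_mul (by norm_num : (0:ℝ) ≤ 2)]
    push_cast
    ring_nf
  rw [hτeq]
  refine Real.rpow_le_rpow_of_exponent_le (by norm_num) ?_
  have hkub : (k:ℝ) < Real.logb 2 (32/ε) / δ + 1 := by
    refine Nat.ceil_lt_add_one ?_
    have h32 : (1:ℝ) ≤ 32/ε := by
      rw [le_div_iff₀ hε0]; linarith
    have h0 : 0 ≤ Real.logb 2 (32/ε) := Real.logb_nonneg (by norm_num) h32
    positivity
  have h32L : Real.logb 2 (32/ε) = 5 + L := logb32_eq hε0
  have hiδ : (1:ℝ) ≤ δ⁻¹ := by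
    rw [le_inv_comm₀ one_pos hδ0]; simpa using hδ1
  have hiδ0 : (0:ℝ) < δ⁻¹ := by positivity
  have hk2 : (k:ℝ) ≤ (5 + L) * δ⁻¹ + 1 := by
    rw [h32L] at hkub
    have heq : (5 + L) / δ = (5+L) * δ⁻¹ := by ring
    rw [heq] at hkub
    linarith
  have goal : 3 * ((k:ℝ) + 1) ≤ 100 * δ⁻¹ * L := by
    nlinarith [mul_nonneg hiδ0.le (by linarith : (0:ℝ) ≤ L - 1),
      mul_nonneg (by linarith : (0:ℝ) ≤ δ⁻¹ - 1) (by linarith : (0:ℝ) ≤ L)]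
  linarith

/-! ### The expansion identity -/

lemma key_identity {X Y J : Type} [Fintype X] [Fintype Y] [Fintype J]
    (k : ℕ) (c : J → ℝ) (e : J → X × Y → ℝ) (χ : X × Y → ℝ) :
    ∑ ω : Fin k → J, (∏ j, c (ω j)) * (∑ p : X × Y, χ p * ∏ j, e (ω j) p)
      = ∑ p : X × Y, χ p * (∑ v : J, c v * e v p) ^ k := by
  have swap : ∑ ω : Fin k → J, (∏ j, c (ω j)) * (∑ p : X × Y, χ p * ∏ j, e (ω j) p)
      = ∑ p : X × Y, χ p * (∑ ω : Fin k → J, (∏ j, c (ω j)) * ∏ j, e (ω j) p) := by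
    simp_rw [Finset.mul_sum]
    rw [Finset.sum_comm]
    refine Finset.sum_congr rfl fun p _ => Finset.sum_congr rfl fun ω _ => by ring
  rw [swap]
  refine Finset.sum_congr rfl fun p _ => ?_
  congr 1
  have step1 : ∀ ω : Fin k → J, (∏ j, c (ω j)) * ∏ j, e (ω j) p
      = ∏ j, (c (ω j) * e (ω j) p) := fun ω => (Finset.prod_mul_distrib).symm
  rw [Finset.sum_congr rfl fun ω _ => step1 ω]
  have h2 := (Finset.prod_univ_sum (fun _ : Fin k => (univ : Finset J))
    (fun _ v => c v * e v p)).symm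
  rw [Fintype.piFinset_univ] at h2
  rw [h2, Finset.prod_const, Finset.card_univ, Fintype.card_fin]

/-! ### The rectangle pieces -/

section Pieces

variable {X Y ι : Type} [Fintype X] [Fintype Y] [DecidableEq X] [DecidableEq Y] [Fintype ι]

/-- The four pieces of a rectangle decomposition: `X`-side. -/
def CA (A : ι → Finset X) (v : ι × Fin 4) : Finset X :=
  if v.2 = 0 ∨ v.2 = 1 then A v.1 else (A v.1)ᶜ

/-- The four pieces of a rectangle decomposition: `Y`-side. -/
def CB (B : ι → Finset Y) (v : ι × Fin 4) : Finset Y :=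
  if v.2 = 0 ∨ v.2 = 2 then B v.1 else (B v.1)ᶜ

/-- Weights of the pieces. -/
noncomputable def pc (w s : ι → ℝ) (v : ι × Fin 4) : ℝ :=
  w v.1 * (if v.2 = 0 then (if s v.1 = 1 then 2 else 0) else 1) / 8

/-- Indicator of a piece. -/
noncomputable def pind (A : ι → Finset X) (B : ι → Finset Y) (v : ι × Fin 4) (p : X × Y) : ℝ :=
  if p.1 ∈ CA A v ∧ p.2 ∈ CB B v then 1 else 0

lemma pind_nonneg (A : ι → Finset X) (B : ι → Finset Y) (v : ι × Fin 4) (p : X × Y) :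
    0 ≤ pind A B v p := by
  unfold pind; split <;> norm_num

lemma pc_nonneg {w s : ι → ℝ} (hw0 : ∀ i, 0 ≤ w i) (v : ι × Fin 4) : 0 ≤ pc w s v := by
  unfold pc
  have := hw0 v.1
  by_cases h2 : v.2 = 0 <;> by_cases h3 : s v.1 = 1 <;> simp [h2, h3] <;> positivity

lemma pc_row {w s : ι → ℝ} (A : ι → Finset X) (B : ι → Finset Y) (i : ι)
    (hsi : s i = 1 ∨ s i = -1) (p : X × Y) :
    ∑ j : Fin 4, pc w s (i, j) * pind A B (i, j) p
      = (w i + w i * s i * (if p.1 ∈ A i ∧ p.2 ∈ B i then (1:ℝ) else 0)) / 8 := by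
  rw [Fin.sum_univ_four]
  unfold pc pind CA CB
  by_cases hx : p.1 ∈ A i <;> by_cases hy : p.2 ∈ B i <;>
    rcases hsi with h1 | h1 <;>
      simp [hx, hy, h1, (by norm_num : ¬((-1:ℝ) = 1))] <;> ring

lemma pc_point {w s : ι → ℝ} (A : ι → Finset X) (B : ι → Finset Y)
    (hs : ∀ i, s i = 1 ∨ s i = -1) (hw1 : ∑ i, w i = 1) (p : X × Y) :
    ∑ v : ι × Fin 4, pc w s v * pind A B v p
      = (1 + ∑ i, w i * s i * (if p.1 ∈ A i ∧ p.2 ∈ B i then (1:ℝ) else 0)) / 8 := by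
  rw [Fintype.sum_prod_type]
  rw [Finset.sum_congr rfl fun i _ => pc_row A B i (hs i) p]
  rw [← Finset.sum_div, Finset.sum_add_distrib, hw1]

lemma pc_total {w s : ι → ℝ} (hw0 : ∀ i, 0 ≤ w i) (hs : ∀ i, s i = 1 ∨ s i = -1)
    (hw1 : ∑ i, w i = 1) : ∑ v : ι × Fin 4, pc w s v ≤ 1 := by
  rw [Fintype.sum_prod_type]
  have hrow : ∀ i : ι, ∑ j : Fin 4, pc w s (i, j) ≤ w i := by
    intro i
    rw [Fin.sum_univ_four]
    unfold pc
    rcases hs i with h1 | h1 <;>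
      simp [h1, (by norm_num : ¬((-1:ℝ) = 1))] <;> nlinarith [hw0 i]
  calc ∑ i, ∑ j : Fin 4, pc w s (i, j) ≤ ∑ i, w i := Finset.sum_le_sum fun i _ => hrow i
    _ = 1 := hw1

lemma mask_prod (A : ι → Finset X) (B : ι → Finset Y) {k : ℕ} (ω : Fin k → ι × Fin 4)
    (p : X × Y) :
    (if (∀ j, p.1 ∈ CA A (ω j)) ∧ (∀ j, p.2 ∈ CB B (ω j)) then (1:ℝ) else 0)
      = ∏ j, pind A B (ω j) p := by
  by_cases hall : (∀ j, p.1 ∈ CA A (ω j)) ∧ (∀ j, p.2 ∈ CB B (ω j))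
  · rw [if_pos hall, eq_comm]
    refine Finset.prod_eq_one fun j _ => ?_
    unfold pind
    exact if_pos ⟨hall.1 j, hall.2 j⟩
  · rw [if_neg hall, eq_comm]
    rw [not_and_or] at hall
    have : ∃ j, ¬(p.1 ∈ CA A (ω j) ∧ p.2 ∈ CB B (ω j)) := by
      rcases hall with hall | hall <;> push_neg at hall <;> obtain ⟨j, hj⟩ := hall
      · exact ⟨j, fun hc => hj hc.1⟩
      · exact ⟨j, fun hc => hj hc.2⟩
    obtain ⟨j, hj⟩ := this
    refine Finset.prod_eq_zero (Finset.mem_univ j) ?_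
    unfold pind
    exact if_neg hj

end Pieces

/-- Conversion of a rectangle sum into an indicator-weighted full sum. -/
lemma sum_rect_eq {X Y : Type} [Fintype X] [Fintype Y] [DecidableEq X] [DecidableEq Y] (S : Finset X) (T : Finset Y)
    (F : X × Y → ℝ) :
    ∑ p ∈ S ×ˢ T, F p = ∑ p : X × Y, F p * (if p.1 ∈ S ∧ p.2 ∈ T then 1 else 0) := by
  classical
  have h1 : ∀ p : X × Y, F p * (if p.1 ∈ S ∧ p.2 ∈ T then (1:ℝ) else 0)
      = if p ∈ S ×ˢ T then F p else 0 := by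
    intro p
    by_cases hp : p.1 ∈ S ∧ p.2 ∈ T <;> simp [Finset.mem_product, hp]
  rw [Finset.sum_congr rfl fun p _ => h1 p, Finset.sum_ite_mem, Finset.univ_inter]


/-! ### Main combinatorial lemma -/

set_option maxHeartbeats 1000000 in
theorem main_side {X Y : Type} [Fintype X] [Fintype Y] [DecidableEq X] [DecidableEq Y]
    (f : X → Y → ℝ) (hf : ∀ x y, f x y = 1 ∨ f x y = -1)
    (δ : ℝ) (hδ0 : 0 < δ) (hδ1 : δ ≤ 1)
    {ι : Type} [Fintype ι] (w : ι → ℝ) (A : ι → Finset X) (B : ι → Finset Y) (s : ι → ℝ)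
    (hw0 : ∀ i, 0 ≤ w i) (hw1 : ∑ i, w i = 1) (hs : ∀ i, s i = 1 ∨ s i = -1)
    (hmargin : ∀ p : X × Y,
      δ ≤ f p.1 p.2 * ∑ i, w i * s i * (if p.1 ∈ A i ∧ p.2 ∈ B i then (1:ℝ) else 0))
    (ε : ℝ) (hε0 : 0 < ε) (hε1 : ε ≤ 1/2)
    (μ : X × Y → ℝ) (hμ0 : ∀ p, 0 ≤ μ p) (hμ1 : ∑ p : X × Y, μ p = 1)
    (hside : 1/2 ≤ ∑ p : X × Y, (if f p.1 p.2 = 1 then μ p else 0)) :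
    ∃ (A' : Finset X) (B' : Finset Y),
      (2:ℝ) ^ (-(100 * δ⁻¹ * Real.logb 2 (1/ε))) ≤ (∑ p ∈ A' ×ˢ B', μ p) ∧
      (1-ε) * (∑ p ∈ A' ×ˢ B', μ p) ≤ |∑ p ∈ A' ×ˢ B', μ p * f p.1 p.2| := by
  classical
  set k : ℕ := ⌈Real.logb 2 (32/ε) / δ⌉₊ with hk
  set a : ℝ := (1+δ)/8 with hadef
  set b : ℝ := (1-δ)/8 with hbdef
  set τ : ℝ := ((1:ℝ)/8)^(k+1) with hτdef
  have ha0 : 0 < a := by rw [hadef]; linarith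
  have hτ0 : 0 < τ := by positivity
  -- pointwise value of the piece sum
  have hp8 : ∀ p : X × Y, ∑ v : ι × Fin 4, pc w s v * pind A B v p
      = (1 + ∑ i, w i * s i * (if p.1 ∈ A i ∧ p.2 ∈ B i then (1:ℝ) else 0)) / 8 :=
    fun p => pc_point A B hs hw1 p
  have hha : ∀ p : X × Y, f p.1 p.2 = 1 →
      a ≤ ∑ v : ι × Fin 4, pc w s v * pind A B v p := by
    intro p hp
    rw [hp8 p, hadef]
    have := hmargin p
    rw [hp, one_mul] at this
    linarith
  have hhb : ∀ p : X × Y, f p.1 p.2 = -1 →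
      ∑ v : ι × Fin 4, pc w s v * pind A B v p ≤ b := by
    intro p hp
    rw [hp8 p, hbdef]
    have := hmargin p
    rw [hp, neg_one_mul] at this
    linarith
  have hh0 : ∀ p : X × Y, 0 ≤ ∑ v : ι × Fin 4, pc w s v * pind A B v p :=
    fun p => Finset.sum_nonneg fun v _ => mul_nonneg (pc_nonneg hw0 v) (pind_nonneg A B v p)
  have hb0 : (0:ℝ) ≤ b := by rw [hbdef]; linarith
  -- the rectangles
  set AW : (Fin k → ι × Fin 4) → Finset X :=
    fun ω => univ.filter (fun x => ∀ j, x ∈ CA A (ω j)) with hAW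
  set BW : (Fin k → ι × Fin 4) → Finset Y :=
    fun ω => univ.filter (fun y => ∀ j, y ∈ CB B (ω j)) with hBW
  have hmask : ∀ (ω : Fin k → ι × Fin 4) (F : X × Y → ℝ),
      ∑ p ∈ AW ω ×ˢ BW ω, F p = ∑ p : X × Y, F p * ∏ j, pind A B (ω j) p := by
    intro ω F
    rw [sum_rect_eq]
    refine Finset.sum_congr rfl fun p _ => ?_
    rw [← mask_prod A B ω p]
    congr 1
    refine if_congr ?_ rfl rfl
    simp only [hAW, hBW, Finset.mem_filter, Finset.mem_univ, true_and]
  have key : ∀ χ : X × Y → ℝ,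
      ∑ ω : Fin k → ι × Fin 4, (∏ j, pc w s (ω j)) * (∑ p ∈ AW ω ×ˢ BW ω, χ p)
        = ∑ p : X × Y, χ p * (∑ v : ι × Fin 4, pc w s v * pind A B v p)^k := by
    intro χ
    refine Eq.trans ?_ (key_identity k (pc w s) (pind A B) χ)
    exact Finset.sum_congr rfl fun ω _ => by rw [hmask ω χ]
  have hWsum : ∑ ω : Fin k → ι × Fin 4, (∏ j, pc w s (ω j))
      = (∑ v : ι × Fin 4, pc w s v)^k := by
    have h2 := (Finset.prod_univ_sum (fun _ : Fin k => (univ : Finset (ι × Fin 4)))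
      (fun _ v => pc w s v)).symm
    rw [Fintype.piFinset_univ] at h2
    rw [h2, Finset.prod_const, Finset.card_univ, Fintype.card_fin]
  -- mass functions
  set χp : X × Y → ℝ := fun p => if f p.1 p.2 = 1 then μ p else 0 with hχpdef
  set χm : X × Y → ℝ := fun p => if f p.1 p.2 = 1 then 0 else μ p with hχmdef
  have hχp0 : ∀ p, 0 ≤ χp p := by
    intro p; simp only [hχpdef]
    by_cases hp : f p.1 p.2 = 1 <;> simp [hp, hμ0 p]
  have hχm0 : ∀ p, 0 ≤ χm p := by
    intro p; simp only [hχmdef]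
    by_cases hp : f p.1 p.2 = 1 <;> simp [hp, hμ0 p]
  have hχadd : ∀ p, χp p + χm p = μ p := by
    intro p; simp only [hχpdef, hχmdef]
    by_cases hp : f p.1 p.2 = 1 <;> simp [hp]
  have hχsub : ∀ p, χp p - χm p = μ p * f p.1 p.2 := by
    intro p; simp only [hχpdef, hχmdef]
    rcases hf p.1 p.2 with hp | hp
    · simp [hp]
    · have hp' : f p.1 p.2 ≠ 1 := by rw [hp]; norm_num
      simp [hp, hp', (by norm_num : ¬((-1:ℝ) = 1))]
  -- aggregate bounds
  have hHp : a^k * (1/2) ≤ ∑ p : X × Y, χp p * (∑ v : ι × Fin 4, pc w s v * pind A B v p)^k := by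
    have h1 : ∑ p : X × Y, χp p * a^k
        ≤ ∑ p : X × Y, χp p * (∑ v : ι × Fin 4, pc w s v * pind A B v p)^k := by
      refine Finset.sum_le_sum fun p _ => ?_
      by_cases hp : f p.1 p.2 = 1
      · exact mul_le_mul_of_nonneg_left (pow_le_pow_left₀ ha0.le (hha p hp) k) (hχp0 p)
      · simp only [hχpdef]; simp [hp]
    have h2 : ∑ p : X × Y, χp p * a^k = (∑ p : X × Y, χp p) * a^k := by
      rw [Finset.sum_mul]
    have h3 : a^k * (1/2) ≤ (∑ p : X × Y, χp p) * a^k := by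
      have h5 : (1:ℝ)/2 ≤ ∑ p : X × Y, χp p := by simpa only [hχpdef] using hside
      nlinarith [pow_pos ha0 k]
    calc a^k * (1/2) ≤ (∑ p : X × Y, χp p) * a^k := h3
      _ = ∑ p : X × Y, χp p * a^k := h2.symm
      _ ≤ _ := h1
  have hHm : ∑ p : X × Y, χm p * (∑ v : ι × Fin 4, pc w s v * pind A B v p)^k ≤ b^k := by
    have h1 : ∑ p : X × Y, χm p * (∑ v : ι × Fin 4, pc w s v * pind A B v p)^k
        ≤ ∑ p : X × Y, χm p * b^k := by
      refine Finset.sum_le_sum fun p _ => ?_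
      rcases hf p.1 p.2 with hp | hp
      · simp only [hχmdef]; simp [hp]
      · exact mul_le_mul_of_nonneg_left (pow_le_pow_left₀ (hh0 p) (hhb p hp) k) (hχm0 p)
    have h3 : ∑ p : X × Y, χm p ≤ 1 := by
      rw [← hμ1]
      refine Finset.sum_le_sum fun p _ => ?_
      have := hχadd p; have := hχp0 p; linarith
    have h4 : ∑ p : X × Y, χm p * b^k = (∑ p : X × Y, χm p) * b^k := (Finset.sum_mul ..).symm
    have h5 : (∑ p : X × Y, χm p) * b^k ≤ 1 * b^k :=
      mul_le_mul_of_nonneg_right h3 (by positivity)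
    calc ∑ p : X × Y, χm p * (∑ v : ι × Fin 4, pc w s v * pind A B v p)^k
        ≤ ∑ p : X × Y, χm p * b^k := h1
      _ = (∑ p : X × Y, χm p) * b^k := h4
      _ ≤ 1 * b^k := h5
      _ = b^k := one_mul _
  have hbk : b^k ≤ (ε/32) * a^k := shrink_bound hδ0 hδ1 hε0
  have hτa : τ ≤ (1/8) * a^k := by
    rw [hτdef, pow_succ]
    have h1 : ((1:ℝ)/8)^k ≤ a^k := by
      refine pow_le_pow_left₀ (by norm_num) ?_ k
      rw [hadef]; linarith
    nlinarith [pow_nonneg (by norm_num : (0:ℝ) ≤ (1:ℝ)/8) k]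
  have hcsum1 : ∑ v : ι × Fin 4, pc w s v ≤ 1 := pc_total hw0 hs hw1
  have hcsum0 : (0:ℝ) ≤ ∑ v : ι × Fin 4, pc w s v :=
    Finset.sum_nonneg fun v _ => pc_nonneg hw0 v
  have hWsum1 : ∑ ω : Fin k → ι × Fin 4, (∏ j, pc w s (ω j)) ≤ 1 := by
    rw [hWsum]; exact pow_le_one₀ hcsum0 hcsum1
  have hWt0 : ∀ ω : Fin k → ι × Fin 4, 0 ≤ ∏ j, pc w s (ω j) :=
    fun ω => Finset.prod_nonneg fun j _ => pc_nonneg hw0 (ω j)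
  -- main positivity
  have hmain : 0 < ∑ ω : Fin k → ι × Fin 4, (∏ j, pc w s (ω j)) *
      ((∑ p ∈ AW ω ×ˢ BW ω, χp p) - (4/ε) * (∑ p ∈ AW ω ×ˢ BW ω, χm p) - τ) := by
    have expand : ∑ ω : Fin k → ι × Fin 4, (∏ j, pc w s (ω j)) *
        ((∑ p ∈ AW ω ×ˢ BW ω, χp p) - (4/ε) * (∑ p ∈ AW ω ×ˢ BW ω, χm p) - τ)
        = (∑ ω : Fin k → ι × Fin 4, (∏ j, pc w s (ω j)) * (∑ p ∈ AW ω ×ˢ BW ω, χp p))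
          - (4/ε) * (∑ ω : Fin k → ι × Fin 4, (∏ j, pc w s (ω j)) * (∑ p ∈ AW ω ×ˢ BW ω, χm p))
          - τ * (∑ ω : Fin k → ι × Fin 4, (∏ j, pc w s (ω j))) := by
      rw [Finset.mul_sum, Finset.mul_sum, ← Finset.sum_sub_distrib, ← Finset.sum_sub_distrib]
      exact Finset.sum_congr rfl fun ω _ => by ring
    rw [expand, key χp, key χm]
    have e1 : (4/ε) * (∑ p : X × Y, χm p * (∑ v : ι × Fin 4, pc w s v * pind A B v p)^k)
        ≤ (1/8) * a^k := by
      have h6 : (4/ε) * (∑ p : X × Y, χm p * (∑ v : ι × Fin 4, pc w s v * pind A B v p)^k)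
          ≤ (4/ε) * ((ε/32) * a^k) :=
        mul_le_mul_of_nonneg_left (le_trans hHm hbk) (by positivity)
      have h7 : (4/ε) * ((ε/32) * a^k) = (1/8) * a^k := by
        field_simp; ring
      linarith
    have e2 : τ * (∑ ω : Fin k → ι × Fin 4, (∏ j, pc w s (ω j))) ≤ (1/8) * a^k := by
      have h8 : τ * (∑ ω : Fin k → ι × Fin 4, (∏ j, pc w s (ω j))) ≤ τ * 1 :=
        mul_le_mul_of_nonneg_left hWsum1 hτ0.le
      rw [mul_one] at h8
      linarith
    have hak : (0:ℝ) < a^k := by positivity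
    nlinarith [hHp]
  -- extract a good tuple
  have hex : ∃ ω : Fin k → ι × Fin 4,
      0 < (∑ p ∈ AW ω ×ˢ BW ω, χp p) - (4/ε) * (∑ p ∈ AW ω ×ˢ BW ω, χm p) - τ := by
    by_contra hcon
    push_neg at hcon
    have : ∑ ω : Fin k → ι × Fin 4, (∏ j, pc w s (ω j)) *
        ((∑ p ∈ AW ω ×ˢ BW ω, χp p) - (4/ε) * (∑ p ∈ AW ω ×ˢ BW ω, χm p) - τ) ≤ 0 :=
      Finset.sum_nonpos fun ω _ => mul_nonpos_of_nonneg_of_nonpos (hWt0 ω) (hcon ω)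
    linarith
  obtain ⟨ω, hω⟩ := hex
  set Sp : ℝ := ∑ p ∈ AW ω ×ˢ BW ω, χp p with hSpdef
  set Sm : ℝ := ∑ p ∈ AW ω ×ˢ BW ω, χm p with hSmdef
  have hSp0 : 0 ≤ Sp := Finset.sum_nonneg fun p _ => hχp0 p
  have hSm0 : 0 ≤ Sm := Finset.sum_nonneg fun p _ => hχm0 p
  have hmeas : ∑ p ∈ AW ω ×ˢ BW ω, μ p = Sp + Sm := by
    rw [hSpdef, hSmdef]
    rw [← Finset.sum_add_distrib]
    exact Finset.sum_congr rfl fun p _ => (hχadd p).symm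
  have hcorr : ∑ p ∈ AW ω ×ˢ BW ω, μ p * f p.1 p.2 = Sp - Sm := by
    rw [hSpdef, hSmdef]
    rw [← Finset.sum_sub_distrib]
    exact Finset.sum_congr rfl fun p _ => (hχsub p).symm
  refine ⟨AW ω, BW ω, ?_, ?_⟩
  · have hSpτ : τ ≤ Sp := by
      have h9 : 0 ≤ (4/ε) * Sm := mul_nonneg (by positivity) hSm0
      linarith
    have hτlb : (2:ℝ) ^ (-(100 * δ⁻¹ * Real.logb 2 (1/ε))) ≤ τ := by
      rw [hτdef, hk]; exact exponent_bound hδ0 hδ1 hε0 hε1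
    rw [hmeas]
    linarith
  · have hSm4 : Sm ≤ (ε/4) * Sp := by
      have h1 : (4/ε) * Sm ≤ Sp := by linarith
      have h2 : Sm = (ε/4) * ((4/ε) * Sm) := by
        field_simp
      rw [h2]
      exact mul_le_mul_of_nonneg_left h1 (by positivity)
    have hbias : (1-ε) * (Sp + Sm) ≤ Sp - Sm := by nlinarith
    rw [hmeas, hcorr]
    exact le_trans hbias (le_abs_self _)


/-! ### Duality: discrepancy lower bound gives a margin representation -/

set_option maxHeartbeats 1000000 in
theorem exists_margin {X Y : Type} [Fintype X] [Fintype Y] [DecidableEq X] [DecidableEq Y]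
    (f : X → Y → ℝ) (δ : ℝ) (hδ0 : 0 < δ)
    (hdisc : ∀ σ : X × Y → ℝ, (∀ p, 0 ≤ σ p) → (∑ p : X × Y, σ p) = 1 →
      ∃ (A : Finset X) (B : Finset Y), δ ≤ |∑ p ∈ A ×ˢ B, f p.1 p.2 * σ p|) :
    ∃ (ι : Type) (_ : Fintype ι) (w : ι → ℝ) (A : ι → Finset X) (B : ι → Finset Y) (s : ι → ℝ),
      (∀ i, 0 ≤ w i) ∧ (∑ i, w i = 1) ∧ (∀ i, s i = 1 ∨ s i = -1) ∧
      ∀ p : X × Y,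
        δ ≤ f p.1 p.2 * ∑ i, w i * s i * (if p.1 ∈ A i ∧ p.2 ∈ B i then (1:ℝ) else 0) := by
  classical
  set φ : Finset X × Finset Y × Bool → (X × Y → ℝ) := fun kk p =>
    f p.1 p.2 * ((if kk.2.2 then (1:ℝ) else -1) *
      (if p.1 ∈ kk.1 ∧ p.2 ∈ kk.2.1 then (1:ℝ) else 0)) with hφ
  by_cases hSQ : ∃ z : X × Y → ℝ, z ∈ convexHull ℝ (Set.range φ) ∧ ∀ p : X × Y, δ ≤ z p
  · obtain ⟨z, hzS, hzQ⟩ := hSQ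
    rw [mem_convexHull_iff_exists_fintype] at hzS
    obtain ⟨ι, hι, w, zf, hw0, hw1, hzf, hsum⟩ := hzS
    choose kk hkk using fun i => (hzf i : zf i ∈ Set.range φ)
    refine ⟨ι, hι, w, fun i => (kk i).1, fun i => (kk i).2.1,
      fun i => if (kk i).2.2 then 1 else -1, hw0, hw1, ?_, ?_⟩
    · intro i; by_cases hb : (kk i).2.2 <;> simp [hb]
    · intro p
      have hz := hzQ p
      have hzp : z p = ∑ i, w i * zf i p := by
        rw [← hsum, Finset.sum_apply]
        exact Finset.sum_congr rfl fun i _ => rfl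
      have hterm : ∀ i, w i * zf i p
          = f p.1 p.2 * (w i * (if (kk i).2.2 then (1:ℝ) else -1) *
              (if p.1 ∈ (kk i).1 ∧ p.2 ∈ (kk i).2.1 then (1:ℝ) else 0)) := by
        intro i
        rw [← hkk i]
        show w i * φ (kk i) p = _
        simp only [hφ]
        ring
      calc δ ≤ z p := hz
        _ = ∑ i, w i * zf i p := hzp
        _ = f p.1 p.2 * ∑ i, w i * (if (kk i).2.2 then (1:ℝ) else -1) *
              (if p.1 ∈ (kk i).1 ∧ p.2 ∈ (kk i).2.1 then (1:ℝ) else 0) := by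
            rw [Finset.mul_sum]
            exact Finset.sum_congr rfl fun i _ => hterm i
  · exfalso
    push_neg at hSQ
    set S : Set (X × Y → ℝ) := convexHull ℝ (Set.range φ) with hS
    set Q : Set (X × Y → ℝ) := {z | ∀ p : X × Y, δ ≤ z p} with hQ
    have hdisj : Disjoint S Q := by
      rw [Set.disjoint_left]
      intro z hzS hzQ
      obtain ⟨p, hp⟩ := hSQ z hzS
      exact absurd (hzQ p) (not_le.mpr hp)
    have hSconv : Convex ℝ S := convex_convexHull ℝ _
    have hScomp : IsCompact S := (Set.finite_range φ).isCompact_convexHull ℝ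
    have hQconv : Convex ℝ Q := by
      intro z1 h1 z2 h2 u v hu hv huv
      have h1' : ∀ p : X × Y, δ ≤ z1 p := h1
      have h2' : ∀ p : X × Y, δ ≤ z2 p := h2
      show ∀ p : X × Y, δ ≤ (u • z1 + v • z2) p
      intro p
      have e3 : (u • z1 + v • z2) p = u * z1 p + v * z2 p := rfl
      have e4 : δ = u * δ + v * δ := by rw [← add_mul, huv, one_mul]
      rw [e3, e4]
      exact add_le_add (mul_le_mul_of_nonneg_left (h1' p) hu)
        (mul_le_mul_of_nonneg_left (h2' p) hv)
    have hQclosed : IsClosed Q := by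
      have hQi : Q = ⋂ p : X × Y, {z : X × Y → ℝ | δ ≤ z p} := by
        ext z; simp [hQ, Set.mem_iInter]
      rw [hQi]
      exact isClosed_iInter fun p => isClosed_le continuous_const (continuous_apply p)
    obtain ⟨ℓ, u, v, hu, huv, hv⟩ :=
      geometric_hahn_banach_compact_closed hSconv hScomp hQconv hQclosed hdisj
    set σ : X × Y → ℝ := fun p => ℓ (Pi.single p 1) with hσ
    have hℓ : ∀ z : X × Y → ℝ, ℓ z = ∑ p : X × Y, z p * σ p := by
      intro z
      have hrep : z = ∑ p : X × Y, Pi.single p (z p) := (Finset.univ_sum_single z).symm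
      conv_lhs => rw [hrep]
      rw [map_sum]
      refine Finset.sum_congr rfl fun p _ => ?_
      have h1 : Pi.single p (z p) = z p • (Pi.single p 1 : X × Y → ℝ) := by
        funext q
        by_cases hq : q = p
        · subst hq; simp [Pi.single_apply]
        · simp [Pi.single_apply, hq]
      rw [h1, map_smul, smul_eq_mul]
    have hδQ : (fun _ : X × Y => δ) ∈ Q := by
      rw [hQ]; exact fun p => le_refl δ
    have hv1 : v < δ * ∑ p : X × Y, σ p := by
      have h3 := hv _ hδQ
      rw [hℓ] at h3
      have h4 : ∑ p : X × Y, (fun _ : X × Y => δ) p * σ p = δ * ∑ p : X × Y, σ p := by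
        rw [Finset.mul_sum]
      rwa [h4] at h3
    have h0S : (0 : X × Y → ℝ) ∈ S := by
      have h5 : φ (∅, ∅, true) = 0 := by
        funext p; simp [hφ]
      rw [hS, ← h5]
      exact subset_convexHull ℝ _ (Set.mem_range_self _)
    have hu0 : (0:ℝ) < u := by
      have h6 := hu _ h0S; rwa [map_zero] at h6
    have hv0 : (0:ℝ) < v := lt_trans hu0 huv
    have hs0 : (0:ℝ) < ∑ p : X × Y, σ p := by
      by_contra hc
      push_neg at hc
      nlinarith
    have hσ0 : ∀ p, 0 ≤ σ p := by
      intro q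
      by_contra hneg
      push_neg at hneg
      set M : ℝ := (v - δ * ∑ p : X × Y, σ p - 1)/σ q with hM
      have hM0 : 0 ≤ M := by
        rw [hM]
        exact div_nonneg_iff.mpr (Or.inr ⟨by linarith, hneg.le⟩)
      have hbQ : (fun p => δ + (if p = q then M else 0)) ∈ Q := by
        rw [hQ]
        intro p
        by_cases hp : p = q <;> simp [hp] <;> linarith
      have h6 := hv _ hbQ
      rw [hℓ] at h6
      have h7 : ∑ p : X × Y, ((fun p => δ + (if p = q then M else 0)) p) * σ p
          = δ * ∑ p : X × Y, σ p + M * σ q := by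
        have h7a : ∀ p : X × Y, (δ + (if p = q then M else 0)) * σ p
            = δ * σ p + (if p = q then M * σ p else 0) := by
          intro p; by_cases hp : p = q <;> simp [hp] <;> ring
        rw [Finset.sum_congr rfl fun p _ => h7a p, Finset.sum_add_distrib, ← Finset.mul_sum,
          Finset.sum_ite_eq' Finset.univ q (fun p => M * σ p)]
        simp
      rw [h7] at h6
      have h8 : M * σ q = v - δ * ∑ p : X × Y, σ p - 1 := by
        have hne : σ q ≠ 0 := ne_of_lt hneg
        rw [hM]; field_simp
      rw [h8] at h6
      linarith
    obtain ⟨Af, Bf, hAB⟩ := hdisc (fun p => σ p / ∑ q : X × Y, σ q)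
      (fun p => div_nonneg (hσ0 p) hs0.le)
      (by rw [← Finset.sum_div]; field_simp)
    set T : ℝ := ∑ p ∈ Af ×ˢ Bf, f p.1 p.2 * σ p with hT
    have hTabs : δ * ∑ p : X × Y, σ p ≤ |T| := by
      have h9 : ∑ p ∈ Af ×ˢ Bf, f p.1 p.2 * (σ p / ∑ q : X × Y, σ q)
          = T / ∑ q : X × Y, σ q := by
        rw [hT, Finset.sum_div]
        exact Finset.sum_congr rfl fun p _ => (mul_div_assoc _ _ _).symm
      rw [h9, abs_div, abs_of_pos hs0, le_div_iff₀ hs0] at hAB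
      linarith
    set bb : Bool := decide (0 ≤ T) with hbb
    have hφT : ℓ (φ (Af, Bf, bb)) = (if bb then (1:ℝ) else -1) * T := by
      rw [hℓ]
      have h10 : ∀ p : X × Y, φ (Af, Bf, bb) p * σ p
          = (if bb then (1:ℝ) else -1) *
              (f p.1 p.2 * σ p * (if p.1 ∈ Af ∧ p.2 ∈ Bf then (1:ℝ) else 0)) := by
        intro p; simp only [hφ]; ring
      rw [Finset.sum_congr rfl fun p _ => h10 p, ← Finset.mul_sum]
      congr 1
      rw [hT, sum_rect_eq Af Bf (fun p => f p.1 p.2 * σ p)]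
    have hsgT : (if bb then (1:ℝ) else -1) * T = |T| := by
      rw [hbb]
      by_cases h0 : 0 ≤ T
      · simp [h0, abs_of_nonneg h0]
      · push_neg at h0
        simp [not_le.mpr h0, abs_of_neg h0]
    have hinS : φ (Af, Bf, bb) ∈ S := by
      rw [hS]
      exact subset_convexHull ℝ _ (Set.mem_range_self _)
    have hfinal := hu _ hinS
    rw [hφT, hsgT] at hfinal
    linarith

end HighDisc

theorem high_discrepancy_gives_near_monochromatic_rectangle :
    ∃ C : ℝ, 0 < C ∧
      ∀ (X Y : Type) [Fintype X] [Fintype Y] [Nonempty X] [Nonempty Y]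
        (f : X → Y → ℝ), (∀ x y, f x y = 1 ∨ f x y = -1) →
        ∀ δ : ℝ, 0 < δ → δ ≤ 1 →
        (∀ σ : X × Y → ℝ, (∀ p, 0 ≤ σ p) → (∑ p : X × Y, σ p) = 1 →
          ∃ (A : Finset X) (B : Finset Y),
            δ ≤ |∑ p ∈ A ×ˢ B, f p.1 p.2 * σ p|) →
        ∀ ε : ℝ, 0 < ε → ε ≤ 1 / 2 →
        ∀ μ : X × Y → ℝ, (∀ p, 0 ≤ μ p) → (∑ p : X × Y, μ p) = 1 →
        ∃ (A : Finset X) (B : Finset Y),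
          (2 : ℝ) ^ (-(C * δ⁻¹ * Real.logb 2 (1 / ε))) ≤ (∑ p ∈ A ×ˢ B, μ p) ∧
          (1 - ε) * (∑ p ∈ A ×ˢ B, μ p) ≤ |∑ p ∈ A ×ˢ B, μ p * f p.1 p.2| := by
  classical
  refine ⟨100, by norm_num, ?_⟩
  intro X Y _ _ _ _ f hf δ hδ0 hδ1 hdisc ε hε0 hε1 μ hμ0 hμ1
  haveI : DecidableEq X := Classical.decEq X
  haveI : DecidableEq Y := Classical.decEq Y
  obtain ⟨ι, hι, w, A, B, s, hw0, hw1, hs, hmargin⟩ := HighDisc.exists_margin f δ hδ0 hdisc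
  letI : Fintype ι := hι
  by_cases hside : 1/2 ≤ ∑ p : X × Y, (if f p.1 p.2 = 1 then μ p else 0)
  · exact HighDisc.main_side f hf δ hδ0 hδ1 w A B s hw0 hw1 hs hmargin ε hε0 hε1 μ hμ0 hμ1 hside
  · set f' : X → Y → ℝ := fun x y => -(f x y) with hf'def
    have hf' : ∀ x y, f' x y = 1 ∨ f' x y = -1 := by
      intro x y; rcases hf x y with hp | hp <;> simp [hf'def, hp]
    have hmargin' : ∀ p : X × Y,
        δ ≤ f' p.1 p.2 * ∑ i, w i * (-(s i)) * (if p.1 ∈ A i ∧ p.2 ∈ B i then (1:ℝ) else 0) := by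
      intro p
      have h1 := hmargin p
      have h2 : ∑ i, w i * (-(s i)) * (if p.1 ∈ A i ∧ p.2 ∈ B i then (1:ℝ) else 0)
          = -(∑ i, w i * s i * (if p.1 ∈ A i ∧ p.2 ∈ B i then (1:ℝ) else 0)) := by
        rw [← Finset.sum_neg_distrib]
        exact Finset.sum_congr rfl fun i _ => by ring
      rw [h2]
      simp only [hf'def]
      calc δ ≤ f p.1 p.2 * ∑ i, w i * s i * (if p.1 ∈ A i ∧ p.2 ∈ B i then (1:ℝ) else 0) := h1
        _ = -(f p.1 p.2) * -(∑ i, w i * s i * (if p.1 ∈ A i ∧ p.2 ∈ B i then (1:ℝ) else 0)) := by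
          ring
    have hs' : ∀ i, -(s i) = 1 ∨ -(s i) = -1 := by
      intro i; rcases hs i with hp | hp
      · right; rw [hp]
      · left; rw [hp]; ring
    have hside' : 1/2 ≤ ∑ p : X × Y, (if f' p.1 p.2 = 1 then μ p else 0) := by
      push_neg at hside
      have htot : (∑ p : X × Y, (if f p.1 p.2 = 1 then μ p else 0))
          + (∑ p : X × Y, (if f p.1 p.2 = 1 then 0 else μ p)) = ∑ p : X × Y, μ p := by
        rw [← Finset.sum_add_distrib]
        refine Finset.sum_congr rfl fun p _ => ?_
        by_cases hp : f p.1 p.2 = 1 <;> simp [hp]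
      rw [hμ1] at htot
      have heq : ∑ p : X × Y, (if f' p.1 p.2 = 1 then μ p else 0)
          = ∑ p : X × Y, (if f p.1 p.2 = 1 then 0 else μ p) := by
        refine Finset.sum_congr rfl fun p _ => ?_
        rcases hf p.1 p.2 with hp | hp
        · have h1 : f' p.1 p.2 = -1 := by simp [hf'def, hp]
          rw [h1, hp]; norm_num
        · have h1 : f' p.1 p.2 = 1 := by simp [hf'def, hp]
          rw [h1, hp]; norm_num
      rw [heq]; linarith
    obtain ⟨A', B', hm, hb⟩ := HighDisc.main_side f' hf' δ hδ0 hδ1 w A B (fun i => -(s i))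
      hw0 hw1 hs' hmargin' ε hε0 hε1 μ hμ0 hμ1 hside'
    refine ⟨A', B', hm, ?_⟩
    have habs : |∑ p ∈ A' ×ˢ B', μ p * f' p.1 p.2| = |∑ p ∈ A' ×ˢ B', μ p * f p.1 p.2| := by
      have hneg : (∑ p ∈ A' ×ˢ B', μ p * f' p.1 p.2)
          = -(∑ p ∈ A' ×ˢ B', μ p * f p.1 p.2) := by
        rw [← Finset.sum_neg_distrib]
        refine Finset.sum_congr rfl fun p _ => ?_
        simp only [hf'def]
        ring
      rw [hneg, abs_neg]
    rwa [habs] at hb
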